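/- arXiv:2202.01009 — 3 statements merged into one kernel-verified Lean document; each statement's English description precedes it below -/
import Mathlib

section
/- Let f : ℝᵈ → ℝ be C¹ with L-Lipschitz gradient. If ∫ e^{f(x)} dx < ∞, then f is bounded above on ℝᵈ. -/
open MeasureTheory Real

noncomputable section

set_option maxHeartbeats 1000000 in
lemma sym_key {d : ℕ} (f : EuclideanSpace ℝ (Fin d) → ℝ)
    (f' : EuclideanSpace ℝ (Fin d) → EuclideanSpace ℝ (Fin d)) (L : NNReal)
    (hgrad : ∀ x, HasGradientAt f (f' x) x) (hlip : LipschitzWith L f')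
    (x u : EuclideanSpace ℝ (Fin d)) :
    2 * f x - L * ‖u‖ ^ 2 ≤ f (x + u) + f (x - u) := by
  have hc1 : ∀ t : ℝ, HasDerivAt (fun s : ℝ => x + s • u) u t := by
    intro t
    simpa using ((hasDerivAt_id t).smul_const u).const_add x
  have hc2 : ∀ t : ℝ, HasDerivAt (fun s : ℝ => x - s • u) (-u) t := by
    intro t
    simpa [sub_eq_add_neg] using ((hasDerivAt_id t).smul_const u).neg.const_add x
  have hd1 : ∀ t : ℝ, HasDerivAt (fun s : ℝ => f (x + s • u))
      (inner ℝ (f' (x + t • u)) u : ℝ) t := by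
    intro t
    have := (hgrad (x + t • u)).hasFDerivAt.comp_hasDerivAt t (hc1 t)
    simpa [Function.comp_def, InnerProductSpace.toDual_apply_apply] using this
  have hd2 : ∀ t : ℝ, HasDerivAt (fun s : ℝ => f (x - s • u))
      (-(inner ℝ (f' (x - t • u)) u : ℝ)) t := by
    intro t
    have := (hgrad (x - t • u)).hasFDerivAt.comp_hasDerivAt t (hc2 t)
    simpa [Function.comp_def, InnerProductSpace.toDual_apply_apply, inner_neg_right] using this
  set h : ℝ → ℝ := fun t => f (x + t • u) + f (x - t • u) + L * ‖u‖ ^ 2 * t ^ 2 with hh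
  have hdh : ∀ t : ℝ, HasDerivAt h
      ((inner ℝ (f' (x + t • u)) u : ℝ) + -(inner ℝ (f' (x - t • u)) u : ℝ)
        + L * ‖u‖ ^ 2 * (2 * t)) t := by
    intro t
    have hp : HasDerivAt (fun s : ℝ => (L : ℝ) * ‖u‖ ^ 2 * s ^ 2)
        ((L : ℝ) * ‖u‖ ^ 2 * (2 * t)) t := by
      have := (hasDerivAt_pow 2 t).const_mul ((L : ℝ) * ‖u‖ ^ 2)
      simpa [mul_comm, mul_assoc, mul_left_comm] using this
    exact ((hd1 t).add (hd2 t)).add hp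
  have hcont : Continuous h := by
    have : Differentiable ℝ h := fun t => (hdh t).differentiableAt
    exact this.continuous
  have hmono : MonotoneOn h (Set.Icc 0 1) := by
    apply monotoneOn_of_deriv_nonneg (convex_Icc 0 1) hcont.continuousOn
    · intro t _
      exact (hdh t).differentiableAt.differentiableWithinAt
    · intro t ht
      rw [interior_Icc] at ht
      rw [(hdh t).deriv]
      have hineq : -((L : ℝ) * (2 * t * ‖u‖) * ‖u‖) ≤
          (inner ℝ (f' (x + t • u)) u : ℝ) + -(inner ℝ (f' (x - t • u)) u : ℝ) := by
        rw [← sub_eq_add_neg, ← inner_sub_left]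
        have h1 : |(inner ℝ (f' (x + t • u) - f' (x - t • u)) u : ℝ)| ≤
            ‖f' (x + t • u) - f' (x - t • u)‖ * ‖u‖ := abs_real_inner_le_norm _ _
        have h2 : ‖f' (x + t • u) - f' (x - t • u)‖ ≤ L * ‖(x + t • u) - (x - t • u)‖ :=
          hlip.norm_sub_le _ _
        have h3 : ‖(x + t • u) - (x - t • u)‖ = 2 * t * ‖u‖ := by
          have he : (x + t • u) - (x - t • u) = (2 * t) • u := by module
          rw [he, norm_smul, Real.norm_eq_abs, abs_of_nonneg (by linarith [ht.1] : (0:ℝ) ≤ 2 * t)]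
        rw [h3] at h2
        nlinarith [neg_abs_le ((inner ℝ (f' (x + t • u) - f' (x - t • u)) u : ℝ)),
          mul_le_mul_of_nonneg_right h2 (norm_nonneg u), norm_nonneg u]
      nlinarith [hineq]
  have h01 : h 0 ≤ h 1 := hmono (by constructor <;> norm_num) (by constructor <;> norm_num)
    zero_le_one
  simp only [hh, zero_smul, one_smul, add_zero, sub_zero] at h01
  nlinarith [h01]

/-- A `C¹` function on `ℝᵈ` with `L`-Lipschitz gradient such that `∫ e^f < ∞` is
bounded above. -/
theorem stmt_9 {d : ℕ} (f : EuclideanSpace ℝ (Fin d) → ℝ)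
    (f' : EuclideanSpace ℝ (Fin d) → EuclideanSpace ℝ (Fin d))
    (L : NNReal)
    (hgrad : ∀ x, HasGradientAt f (f' x) x)
    (hlip : LipschitzWith L f')
    (hint : Integrable (fun x => Real.exp (f x)) volume) :
    ∃ M : ℝ, ∀ x, f x ≤ M := by
  have hdiff : Differentiable ℝ f := fun x => (hgrad x).differentiableAt
  have hfc : Continuous f := hdiff.continuous
  set C : ENNReal := ∫⁻ y, ENNReal.ofReal (Real.exp (f y)) ∂volume with hC
  have hCfin : C ≠ ⊤ := by
    have := hint.hasFiniteIntegral
    rw [HasFiniteIntegral] at this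
    have heq : ∀ y, (‖Real.exp (f y)‖₊ : ENNReal) = ENNReal.ofReal (Real.exp (f y)) := by
      intro y
      exact Real.enorm_eq_ofReal (Real.exp_pos _).le
    rw [hC]
    simp_rw [← heq]
    exact this.ne
  set v : ENNReal := volume (Metric.ball (0 : EuclideanSpace ℝ (Fin d)) 1) with hv
  have hv0 : v ≠ 0 := (Metric.measure_ball_pos volume _ one_pos).ne'
  have hvt : v ≠ ⊤ := measure_ball_lt_top.ne
  refine ⟨Real.log ((C / v).toReal) + L / 2, fun x => ?_⟩
  set B := Metric.ball x 1 with hB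
  set I : ENNReal := ∫⁻ y in B, ENNReal.ofReal (Real.exp (f y)) ∂volume with hI
  have hIC : I ≤ C := setLIntegral_le_lintegral _ _
  have hmeas : Measurable fun y => ENNReal.ofReal (Real.exp (f y)) :=
    (ENNReal.measurable_ofReal.comp (Real.measurable_exp.comp hfc.measurable))
  -- reflection
  have hrefl : (∫⁻ y in B, ENNReal.ofReal (Real.exp (f ((x + x) - y))) ∂volume) = I := by
    have hpre : (fun y : EuclideanSpace ℝ (Fin d) => (x + x) - y) ⁻¹' B = B := by
      ext y
      simp only [hB, Set.mem_preimage, Metric.mem_ball]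
      rw [dist_eq_norm, dist_eq_norm,
        show x + x - y - x = -(y - x) by module, norm_neg]
    have := (Measure.measurePreserving_sub_left (volume :
        Measure (EuclideanSpace ℝ (Fin d))) (x + x)).setLIntegral_comp_preimage_emb
      (MeasurableEquiv.subLeft (x + x)).measurableEmbedding
      (fun y => ENNReal.ofReal (Real.exp (f y))) B
    rw [hpre] at this
    rw [this, hI]
  -- pointwise bound
  have hpt : ∀ y ∈ B, ENNReal.ofReal (2 * Real.exp (f x - L / 2)) ≤
      ENNReal.ofReal (Real.exp (f y)) + ENNReal.ofReal (Real.exp (f ((x + x) - y))) := by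
    intro y hy
    rw [← ENNReal.ofReal_add (Real.exp_pos _).le (Real.exp_pos _).le]
    apply ENNReal.ofReal_le_ofReal
    set u := y - x with hu
    have h1 : x + u = y := by module
    have h2 : x - u = (x + x) - y := by module
    have hkey := sym_key f f' L hgrad hlip x u
    rw [h1, h2] at hkey
    have hul : ‖u‖ < 1 := by
      rw [hu, ← dist_eq_norm]
      exact Metric.mem_ball.mp hy
    have h01 : ‖u‖ ^ 2 ≤ 1 := by nlinarith [norm_nonneg u, hul]
    have hLu : (L : ℝ) * ‖u‖ ^ 2 ≤ (L : ℝ) * 1 :=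
      mul_le_mul_of_nonneg_left h01 L.coe_nonneg
    rw [mul_one] at hLu
    have hfsum : 2 * (f x - L / 2) ≤ f y + f ((x + x) - y) := by
      linarith [hkey, hLu]
    have hAM : 2 * Real.exp ((f y + f ((x + x) - y)) / 2) ≤
        Real.exp (f y) + Real.exp (f ((x + x) - y)) := by
      have := two_mul_le_add_sq (Real.exp (f y / 2)) (Real.exp (f ((x + x) - y) / 2))
      calc 2 * Real.exp ((f y + f ((x + x) - y)) / 2)
          = 2 * Real.exp (f y / 2) * Real.exp (f ((x + x) - y) / 2) := by
            rw [mul_assoc, ← Real.exp_add]; ring_nf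
        _ ≤ Real.exp (f y / 2) ^ 2 + Real.exp (f ((x + x) - y) / 2) ^ 2 := this
        _ = Real.exp (f y) + Real.exp (f ((x + x) - y)) := by
            rw [sq, sq, ← Real.exp_add, ← Real.exp_add, add_halves, add_halves]
    calc 2 * Real.exp (f x - L / 2) ≤ 2 * Real.exp ((f y + f ((x + x) - y)) / 2) := by
          have : f x - L / 2 ≤ (f y + f ((x + x) - y)) / 2 := by linarith
          have := Real.exp_le_exp.mpr this
          linarith
      _ ≤ _ := hAM
  -- integrate
  have hint2 : ENNReal.ofReal (2 * Real.exp (f x - L / 2)) * volume B ≤ I + I := by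
    calc ENNReal.ofReal (2 * Real.exp (f x - L / 2)) * volume B
        = ∫⁻ _ in B, ENNReal.ofReal (2 * Real.exp (f x - L / 2)) ∂volume := by
          rw [setLIntegral_const, mul_comm]
      _ ≤ ∫⁻ y in B, (ENNReal.ofReal (Real.exp (f y)) +
            ENNReal.ofReal (Real.exp (f ((x + x) - y)))) ∂volume := by
          apply setLIntegral_mono (by fun_prop) hpt
      _ = I + I := by
          rw [lintegral_add_left hmeas, hrefl, hI]
  have hvB : volume B = v := Measure.addHaar_ball_center volume x 1
  have h2I : I + I ≤ C + C := add_le_add hIC hIC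
  have hmain : ENNReal.ofReal (Real.exp (f x - L / 2)) * v ≤ C := by
    have h2 : ENNReal.ofReal (2 * Real.exp (f x - L / 2)) =
        2 * ENNReal.ofReal (Real.exp (f x - L / 2)) := by
      rw [ENNReal.ofReal_mul (by norm_num)]
      norm_num
    have := le_trans hint2 h2I
    rw [hvB, h2, mul_assoc] at this
    rw [← two_mul C] at this
    exact (ENNReal.mul_le_mul_iff_right (by norm_num) (by norm_num)).mp this
  -- extract real bound
  have hdiv : ENNReal.ofReal (Real.exp (f x - L / 2)) ≤ C / v :=
    ENNReal.le_div_iff_mul_le (Or.inl hv0) (Or.inl hvt) |>.mpr hmain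
  have hfin : C / v ≠ ⊤ := by
    simp [ENNReal.div_eq_top, hv0, hCfin]
  have hreal : Real.exp (f x - L / 2) ≤ (C / v).toReal :=
    (ENNReal.ofReal_le_iff_le_toReal hfin).mp hdiv
  have hpos : 0 < (C / v).toReal := lt_of_lt_of_le (Real.exp_pos _) hreal
  have := (Real.le_log_iff_exp_le hpos).mpr hreal
  linarith
end
end

section
/- Suppose G : P₂(ℝᵈ) → ℝ satisfies G(μ) ≥ 2C₁M₂(μ) - C₂ for all μ, with C₁ > 0. Then for every 0 < τ ≤ τ₀ and every μ ∈ P₂ᵃ(ℝᵈ), F_τ(μ) := G(μ) + τH(μ) ≥ C₁ M₂(μ) - C₂', where C₂' depends only on C₁, C₂, τ₀, d. Consequently there exist constants A, B > 0 (depending only on C₁, C₂, τ₀, d) such that -H(μ) ≤ A·F_τ(μ) + B for all such μ and τ. -/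
open MeasureTheory Real Set

noncomputable section

def IsP2 {d : ℕ} (μ : Measure (EuclideanSpace ℝ (Fin d))) : Prop :=
  IsProbabilityMeasure μ ∧ Integrable (fun x => ‖x‖ ^ 2) μ

def ent {d : ℕ} (μ : Measure (EuclideanSpace ℝ (Fin d))) : ℝ :=
  ∫ x, Real.log ((μ.rnDeriv volume x).toReal) ∂μ

def M2 {d : ℕ} (μ : Measure (EuclideanSpace ℝ (Fin d))) : ℝ :=
  ∫ x, ‖x‖ ^ 2 ∂μ

lemma integrable_gauss {d : ℕ} (a : ℝ) (ha : 0 < a) :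
    Integrable (fun x : EuclideanSpace ℝ (Fin d) => Real.exp (-a * ‖x‖ ^ 2)) := by
  have h := GaussianFourier.integrable_cexp_neg_mul_sq_norm_add (V := EuclideanSpace ℝ (Fin d))
    (b := (a : ℂ)) (by simpa using ha) 0 0
  have h2 := h.norm
  refine h2.congr (Filter.Eventually.of_forall fun v => ?_)
  have e1 : (-(a:ℂ) * (‖v‖:ℂ)^2 + 0 * ((inner ℝ (0:EuclideanSpace ℝ (Fin d)) v : ℝ) : ℂ))
      = (((-a * ‖v‖ ^ 2 : ℝ)) : ℂ) := by push_cast; ring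
  simp only [e1, Complex.norm_exp, Complex.ofReal_re]

lemma gauss_pos {d : ℕ} (a : ℝ) (ha : 0 < a) :
    0 < ∫ x : EuclideanSpace ℝ (Fin d), Real.exp (-a * ‖x‖ ^ 2) := by
  rw [integral_pos_iff_support_of_nonneg (fun x => (Real.exp_pos _).le)
    (integrable_gauss a ha)]
  have : Function.support (fun x : EuclideanSpace ℝ (Fin d) => Real.exp (-a * ‖x‖ ^ 2))
      = Set.univ := by
    ext x; simp [Function.mem_support, Real.exp_ne_zero]
  rw [this]
  exact isOpen_univ.measure_pos volume ⟨0, trivial⟩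

/-- Entropy lower bound against a Gaussian reference. -/
lemma neg_ent_le {d : ℕ} (a : ℝ) (ha : 0 < a) (μ : Measure (EuclideanSpace ℝ (Fin d)))
    (hp : IsProbabilityMeasure μ) (hac : μ ≪ volume)
    (hM : Integrable (fun x => ‖x‖ ^ 2) μ)
    (hlog : Integrable (fun x => Real.log ((μ.rnDeriv volume x).toReal)) μ) :
    -ent μ ≤ a * M2 μ + Real.log (∫ x : EuclideanSpace ℝ (Fin d), Real.exp (-a * ‖x‖ ^ 2)) := by
  set E := EuclideanSpace ℝ (Fin d)
  set I : ℝ := ∫ x : E, Real.exp (-a * ‖x‖ ^ 2) with hIdef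
  have hI : 0 < I := gauss_pos a ha
  set f : E → ℝ := fun x => (μ.rnDeriv volume x).toReal with hfdef
  set g : E → ℝ := fun x => I⁻¹ * Real.exp (-a * ‖x‖ ^ 2) with hgdef
  have hgpos : ∀ x, 0 < g x := fun x => mul_pos (inv_pos.mpr hI) (Real.exp_pos _)
  have hfnn : ∀ x, 0 ≤ f x := fun x => ENNReal.toReal_nonneg
  have hIg : Integrable g volume := (integrable_gauss a ha).const_mul _
  have hIf : Integrable f volume := Measure.integrable_toReal_rnDeriv
  have hintf : ∫ x, f x = 1 := by
    rw [hfdef, Measure.integral_toReal_rnDeriv hac, probReal_univ]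
  have hintg : ∫ x, g x = 1 := by
    rw [hgdef, integral_const_mul, inv_mul_cancel₀ hI.ne']
  -- transfer μ-integrals to volume-integrals
  have hconv : ∀ h : E → ℝ, ∫ x, f x * h x = ∫ x, h x ∂μ := by
    intro h
    have := MeasureTheory.integral_rnDeriv_smul hac (f := h)
    simpa [smul_eq_mul] using this
  have hconvI : ∀ h : E → ℝ, Integrable h μ → Integrable (fun x => f x * h x) volume := by
    intro h hh
    have := (MeasureTheory.integrable_rnDeriv_smul_iff hac (f := h)).mpr hh
    simpa [smul_eq_mul] using this
  -- log g decomposition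
  have hlogg : ∀ x, Real.log (g x) = Real.log I⁻¹ + (-a * ‖x‖ ^ 2) := by
    intro x
    rw [hgdef]
    rw [Real.log_mul (by positivity) (Real.exp_ne_zero _), Real.log_exp]
  -- integrability pieces
  have hIflogf : Integrable (fun x => f x * Real.log (f x)) volume := by
    have := hconvI _ hlog
    simpa using this
  have hIfnsq : Integrable (fun x => f x * ‖x‖ ^ 2) volume := hconvI _ hM
  have hIflogg : Integrable (fun x => f x * Real.log (g x)) volume := by
    have h1 : Integrable (fun x => Real.log I⁻¹ * f x + (-a) * (f x * ‖x‖ ^ 2)) volume :=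
      (hIf.const_mul _).add (hIfnsq.const_mul _)
    refine h1.congr (Filter.Eventually.of_forall fun x => ?_)
    dsimp only
    rw [hlogg x]; ring
  -- pointwise inequality
  have hpt : ∀ x, f x - g x ≤ f x * Real.log (f x) - f x * Real.log (g x) := by
    intro x
    rcases eq_or_lt_of_le (hfnn x) with h0 | hfpos
    · rw [← h0]; simp; exact (hgpos x).le
    · have hlog1 : Real.log (g x / f x) ≤ g x / f x - 1 :=
        Real.log_le_sub_one_of_pos (div_pos (hgpos x) hfpos)
      have := mul_le_mul_of_nonneg_left hlog1 hfpos.le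
      rw [Real.log_div (hgpos x).ne' hfpos.ne'] at this
      have h2 : f x * (g x / f x - 1) = g x - f x := by field_simp
      nlinarith [this]
  -- integrate
  have hmono : ∫ x, (f x - g x) ≤ ∫ x, (f x * Real.log (f x) - f x * Real.log (g x)) :=
    integral_mono (hIf.sub hIg) (hIflogf.sub hIflogg) hpt
  rw [integral_sub hIf hIg, integral_sub hIflogf hIflogg, hintf, hintg] at hmono
  have hent : ∫ x, f x * Real.log (f x) = ent μ := hconv _
  have hlgg : ∫ x, f x * Real.log (g x) = Real.log I⁻¹ - a * M2 μ := by
    rw [hconv]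
    have : ∫ x, Real.log (g x) ∂μ = ∫ x, (Real.log I⁻¹ + (-a * ‖x‖ ^ 2)) ∂μ := by
      congr 1; funext x; exact hlogg x
    rw [this, integral_add (integrable_const _) (hM.const_mul (-a)),
      integral_const, probReal_univ, integral_const_mul]
    simp only [ENNReal.toReal_one, one_smul, M2]
    ring
  rw [hent, hlgg] at hmono
  have := Real.log_inv I
  linarith [hmono, this]

/-- If `G(μ) ≥ 2C₁M₂(μ) - C₂`, then uniformly over `0 < τ ≤ τ₀`,
`F_τ(μ) ≥ C₁ M₂(μ) - C₂'` and `-H(μ) ≤ A F_τ(μ) + B` for constants depending only on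
`C₁, C₂, τ₀, d`. -/
theorem stmt_11 {d : ℕ} (C₁ C₂ τ₀ : ℝ) (hC₁ : 0 < C₁) (hτ₀ : 0 < τ₀)
    (G : Measure (EuclideanSpace ℝ (Fin d)) → ℝ)
    (hGlb : ∀ μ, IsP2 μ → μ ≪ volume → G μ ≥ 2 * C₁ * M2 μ - C₂) :
    ∃ C₂' A B : ℝ, 0 < A ∧ 0 < B ∧
      ∀ τ : ℝ, 0 < τ → τ ≤ τ₀ →
        ∀ μ : Measure (EuclideanSpace ℝ (Fin d)), IsP2 μ → μ ≪ volume →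
          Integrable (fun x => Real.log ((μ.rnDeriv volume x).toReal)) μ →
          G μ + τ * ent μ ≥ C₁ * M2 μ - C₂' ∧
          -ent μ ≤ A * (G μ + τ * ent μ) + B := by
  set a : ℝ := C₁ / τ₀ with hadef
  have ha : 0 < a := div_pos hC₁ hτ₀
  set L : ℝ := Real.log (∫ x : EuclideanSpace ℝ (Fin d), Real.exp (-a * ‖x‖ ^ 2)) with hL
  set L₁ : ℝ := Real.log (∫ x : EuclideanSpace ℝ (Fin d), Real.exp (-(1:ℝ) * ‖x‖ ^ 2)) with hL1
  set C₂' : ℝ := C₂ + τ₀ * max L 0 with hC2'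
  refine ⟨C₂', C₁⁻¹, max (C₂' / C₁ + L₁) 0 + 1, inv_pos.mpr hC₁, by positivity, ?_⟩
  intro τ hτ hττ₀ μ hμP2 hac hlog
  obtain ⟨hp, hM⟩ := hμP2
  have hM2nn : 0 ≤ M2 μ := integral_nonneg fun x => by positivity
  have key := neg_ent_le a ha μ hp hac hM hlog
  have key1 := neg_ent_le 1 one_pos μ hp hac hM hlog
  -- first part
  have hτent : τ * ent μ ≥ -(C₁ * M2 μ) - τ₀ * max L 0 := by
    have h1 : τ * (-ent μ) ≤ τ * (a * M2 μ + L) :=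
      mul_le_mul_of_nonneg_left key hτ.le
    have h2 : τ * a ≤ C₁ := by
      rw [hadef]
      calc τ * (C₁ / τ₀) = C₁ * (τ / τ₀) := by ring
        _ ≤ C₁ * 1 := mul_le_mul_of_nonneg_left ((div_le_one hτ₀).mpr hττ₀) hC₁.le
        _ = C₁ := mul_one _
    have h3 : τ * (a * M2 μ) ≤ C₁ * M2 μ := by
      rw [← mul_assoc]
      exact mul_le_mul_of_nonneg_right h2 hM2nn
    have h4 : τ * L ≤ τ₀ * max L 0 := by
      rcases le_or_gt 0 L with hL0 | hL0
      · calc τ * L ≤ τ₀ * L := mul_le_mul_of_nonneg_right hττ₀ hL0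
          _ ≤ τ₀ * max L 0 := mul_le_mul_of_nonneg_left (le_max_left _ _) hτ₀.le
      · have : τ * L < 0 := mul_neg_of_pos_of_neg hτ hL0
        have h5 : 0 ≤ τ₀ * max L 0 := mul_nonneg hτ₀.le (le_max_right _ _)
        linarith
    nlinarith [h1, h3, h4]
  have hG := hGlb μ ⟨hp, hM⟩ hac
  have part1 : G μ + τ * ent μ ≥ C₁ * M2 μ - C₂' := by
    rw [hC2']
    have : G μ + τ * ent μ ≥ (2 * C₁ * M2 μ - C₂) + (-(C₁ * M2 μ) - τ₀ * max L 0) := by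
      exact add_le_add hG hτent
    linarith
  refine ⟨part1, ?_⟩
  -- second part
  have hM2le : M2 μ ≤ (G μ + τ * ent μ + C₂') / C₁ := by
    rw [le_div_iff₀ hC₁]
    linarith [part1]
  have : -ent μ ≤ 1 * M2 μ + L₁ := key1
  have h6 : -ent μ ≤ C₁⁻¹ * (G μ + τ * ent μ) + (C₂' / C₁ + L₁) := by
    have : C₁⁻¹ * (G μ + τ * ent μ) + (C₂' / C₁ + L₁)
        = (G μ + τ * ent μ + C₂') / C₁ + L₁ := by field_simp; ring
    rw [this]
    linarith [hM2le]
  calc -ent μ ≤ C₁⁻¹ * (G μ + τ * ent μ) + (C₂' / C₁ + L₁) := h6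
    _ ≤ C₁⁻¹ * (G μ + τ * ent μ) + (max (C₂' / C₁ + L₁) 0 + 1) := by
        have := le_max_left (C₂' / C₁ + L₁) 0
        linarith
end
end

section
/- Let G : P₂(ℝᵈ) → ℝ admit at every μ a first-variation V[μ] which is continuous in (μ, x) (with μ in the W₂ topology on line segments). Then for μ₀, μ₁ ∈ P₂(ℝᵈ) and μ_t = (1-t)μ₀ + tμ₁, one has G(μ₁) - G(μ₀) = ∫₀¹ ∫ V[μ_t] d(μ₁ - μ₀) dt. -/
open MeasureTheory Real Filter Set

noncomputable section


/-- The set of strict local minima of a real function is countable. -/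
lemma countable_strictLocalMin (k : ℝ → ℝ) :
    {t : ℝ | ∀ᶠ s in nhdsWithin t {t}ᶜ, k t < k s}.Countable := by
  have hsub : {t : ℝ | ∀ᶠ s in nhdsWithin t {t}ᶜ, k t < k s} ⊆
      ⋃ (p : ℚ) (q : ℚ), {t : ℝ | (p : ℝ) < t ∧ t < q ∧
        ∀ s, (p : ℝ) < s → s < (q : ℝ) → s ≠ t → k t < k s} := by
    intro t ht
    simp only [mem_setOf_eq] at ht
    rw [eventually_nhdsWithin_iff, Metric.eventually_nhds_iff] at ht
    obtain ⟨ε, εpos, hε⟩ := ht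
    obtain ⟨p, hp1, hp2⟩ := exists_rat_btwn (show t - ε < t by linarith)
    obtain ⟨q, hq1, hq2⟩ := exists_rat_btwn (show t < t + ε by linarith)
    refine mem_iUnion.2 ⟨p, mem_iUnion.2 ⟨q, hp2, hq1, fun s hs1 hs2 hst => ?_⟩⟩
    exact hε (by rw [Real.dist_eq, abs_lt]; constructor <;> linarith) hst
  refine Set.Countable.mono hsub ?_
  refine Set.countable_iUnion fun p => Set.countable_iUnion fun q => ?_
  refine Set.Subsingleton.countable fun a ha b hb => ?_
  by_contra hab
  have h1 := ha.2.2 b hb.1 hb.2.1 (Ne.symm hab)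
  have h2 := hb.2.2 a ha.1 ha.2.1 hab
  linarith

/-- Young-type theorem: if the right and left derivatives of `h` exist everywhere on `(0,1)`,
they coincide off a countable set. -/
lemma countable_onesided_ne (h g g' : ℝ → ℝ)
    (hr : ∀ t ∈ Ioo (0:ℝ) 1, Tendsto (slope h t) (nhdsWithin t (Ioi t)) (nhds (g t)))
    (hl : ∀ t ∈ Ioo (0:ℝ) 1, Tendsto (slope h t) (nhdsWithin t (Iio t)) (nhds (g' t))) :
    {t | t ∈ Ioo (0:ℝ) 1 ∧ g t ≠ g' t}.Countable := by
  have key : ∀ (p : ℚ), ∀ t ∈ Ioo (0:ℝ) 1, g' t < p → (p : ℝ) < g t →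
      (∀ᶠ s in nhdsWithin t {t}ᶜ, h t - p * t < h s - p * s) := by
    intro p t ht hgl hgr
    have h1 : ∀ᶠ s in nhdsWithin t (Ioi t), (p : ℝ) < slope h t s :=
      (hr t ht).eventually (eventually_gt_nhds hgr)
    have h2 : ∀ᶠ s in nhdsWithin t (Iio t), slope h t s < p :=
      (hl t ht).eventually (eventually_lt_nhds hgl)
    rw [eventually_nhdsWithin_iff] at h1 h2 ⊢
    filter_upwards [h1, h2] with s hs1 hs2 hsne
    have hne : s ≠ t := hsne
    rcases hne.lt_or_gt with hlt | hlt
    · have := hs2 hlt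
      rw [slope_def_field, div_lt_iff_of_neg (by linarith : s - t < 0)] at this
      nlinarith
    · have := hs1 hlt
      rw [slope_def_field, lt_div_iff₀ (by linarith : (0:ℝ) < s - t)] at this
      nlinarith
  have keymax : ∀ (p : ℚ), ∀ t ∈ Ioo (0:ℝ) 1, g t < p → (p : ℝ) < g' t →
      (∀ᶠ s in nhdsWithin t {t}ᶜ, -(h t - p * t) < -(h s - p * s)) := by
    intro p t ht hgr hgl
    have h1 : ∀ᶠ s in nhdsWithin t (Ioi t), slope h t s < p :=
      (hr t ht).eventually (eventually_lt_nhds hgr)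
    have h2 : ∀ᶠ s in nhdsWithin t (Iio t), (p : ℝ) < slope h t s :=
      (hl t ht).eventually (eventually_gt_nhds hgl)
    rw [eventually_nhdsWithin_iff] at h1 h2 ⊢
    filter_upwards [h1, h2] with s hs1 hs2 hsne
    have hne : s ≠ t := hsne
    rcases hne.lt_or_gt with hlt | hlt
    · have := hs2 hlt
      rw [slope_def_field, lt_div_iff_of_neg (by linarith : s - t < 0)] at this
      nlinarith
    · have := hs1 hlt
      rw [slope_def_field, div_lt_iff₀ (by linarith : (0:ℝ) < s - t)] at this
      nlinarith
  have hsub : {t | t ∈ Ioo (0:ℝ) 1 ∧ g t ≠ g' t} ⊆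
      (⋃ (p : ℚ), {t : ℝ | ∀ᶠ s in nhdsWithin t {t}ᶜ,
          (fun s => h s - p * s) t < (fun s => h s - p * s) s}) ∪
      (⋃ (p : ℚ), {t : ℝ | ∀ᶠ s in nhdsWithin t {t}ᶜ,
          (fun s => -(h s - p * s)) t < (fun s => -(h s - p * s)) s}) := by
    rintro t ⟨ht, hne⟩
    rcases lt_or_gt_of_ne hne with hlt | hlt
    · -- g t < g' t : strict local max case
      obtain ⟨p, hp1, hp2⟩ := exists_rat_btwn hlt
      exact Or.inr (mem_iUnion.2 ⟨p, keymax p t ht hp1 hp2⟩)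
    · obtain ⟨p, hp1, hp2⟩ := exists_rat_btwn hlt
      exact Or.inl (mem_iUnion.2 ⟨p, key p t ht hp1 hp2⟩)
  refine Set.Countable.mono hsub (Set.Countable.union ?_ ?_) <;>
    exact Set.countable_iUnion fun p => countable_strictLocalMin _


/-- Integral formula: `G(μ₁) - G(μ₀) = ∫₀¹ ∫ V[μ_t] d(μ₁ - μ₀) dt` along the line
segment `μ_t = (1-t)μ₀ + tμ₁`. -/
theorem stmt_12 {d : ℕ}
    (G : Measure (EuclideanSpace ℝ (Fin d)) → ℝ)
    (V : Measure (EuclideanSpace ℝ (Fin d)) → EuclideanSpace ℝ (Fin d) → ℝ)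
    (hVcont : ∀ μ, IsP2 μ → Continuous (V μ))
    -- first-variation property at every μ ∈ P₂
    (hfirstvar : ∀ μ, IsP2 μ → ∀ ν, IsP2 ν →
      Tendsto (fun ε : ℝ =>
          (G (ENNReal.ofReal (1 - ε) • μ + ENNReal.ofReal ε • ν) - G μ) / ε)
        (nhdsWithin 0 (Ioi 0))
        (nhds ((∫ x, V μ x ∂ν) - ∫ x, V μ x ∂μ)))
    (μ₀ μ₁ : Measure (EuclideanSpace ℝ (Fin d))) (hμ₀ : IsP2 μ₀) (hμ₁ : IsP2 μ₁)
    -- continuity in t of the first-variation integral along the segment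
    (hcont : ContinuousOn (fun t : ℝ =>
        (∫ x, V (ENNReal.ofReal (1 - t) • μ₀ + ENNReal.ofReal t • μ₁) x ∂μ₁) -
        ∫ x, V (ENNReal.ofReal (1 - t) • μ₀ + ENNReal.ofReal t • μ₁) x ∂μ₀)
      (Icc 0 1)) :
    G μ₁ - G μ₀ = ∫ t in Icc (0 : ℝ) 1,
      ((∫ x, V (ENNReal.ofReal (1 - t) • μ₀ + ENNReal.ofReal t • μ₁) x ∂μ₁) -
        ∫ x, V (ENNReal.ofReal (1 - t) • μ₀ + ENNReal.ofReal t • μ₁) x ∂μ₀) := by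
  haveI := hμ₀.1; haveI := hμ₁.1
  set m : ℝ → Measure (EuclideanSpace ℝ (Fin d)) :=
    fun t => ENNReal.ofReal (1 - t) • μ₀ + ENNReal.ofReal t • μ₁ with hm
  set h : ℝ → ℝ := fun t => G (m t) with hh
  set c : ℝ → ℝ := fun t => ∫ x, V (m t) x ∂(m t) with hc
  set φ : ℝ → ℝ := fun t => (∫ x, V (m t) x ∂μ₁) - ∫ x, V (m t) x ∂μ₀ with hφ
  set g : ℝ → ℝ := fun t => ((∫ x, V (m t) x ∂μ₁) - c t) / (1 - t) with hg
  set g' : ℝ → ℝ := fun t => (c t - ∫ x, V (m t) x ∂μ₀) / t with hg'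
  show G μ₁ - G μ₀ = ∫ t in Icc (0 : ℝ) 1, φ t
  -- m t is P2
  have hP2 : ∀ t ∈ Icc (0:ℝ) 1, IsP2 (m t) := by
    intro t ht
    constructor
    · constructor
      rw [hm]
      simp only [Measure.add_apply, Measure.smul_apply, smul_eq_mul, measure_univ, mul_one]
      rw [← ENNReal.ofReal_add (by linarith [ht.2]) ht.1]
      norm_num
    · exact (hμ₀.2.smul_measure ENNReal.ofReal_ne_top).add_measure
        (hμ₁.2.smul_measure ENNReal.ofReal_ne_top)
  have hm0 : m 0 = μ₀ := by rw [hm]; simp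
  have hm1 : m 1 = μ₁ := by rw [hm]; simp
  -- mixing identities
  have hmixR : ∀ t ∈ Icc (0:ℝ) 1, ∀ ε ∈ Icc (0:ℝ) 1,
      ENNReal.ofReal (1 - ε) • m t + ENNReal.ofReal ε • μ₁ = m (t + (1 - t) * ε) := by
    intro t ht ε hε
    have e1 : ENNReal.ofReal (1 - ε) • m t + ENNReal.ofReal ε • μ₁
        = (ENNReal.ofReal (1 - ε) * ENNReal.ofReal (1 - t)) • μ₀
          + (ENNReal.ofReal (1 - ε) * ENNReal.ofReal t + ENNReal.ofReal ε) • μ₁ := by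
      simp only [hm, smul_add, smul_smul, add_smul]
      abel
    rw [e1, hm]
    congr 1
    · rw [← ENNReal.ofReal_mul (by linarith [hε.2])]
      congr 1; ring
    · rw [← ENNReal.ofReal_mul (by linarith [hε.2]),
        ← ENNReal.ofReal_add (by nlinarith [hε.1, hε.2, ht.1, ht.2]) hε.1]
      congr 1; ring
  have hmixL : ∀ t ∈ Icc (0:ℝ) 1, ∀ ε ∈ Icc (0:ℝ) 1,
      ENNReal.ofReal (1 - ε) • m t + ENNReal.ofReal ε • μ₀ = m (t - t * ε) := by
    intro t ht ε hε
    have e1 : ENNReal.ofReal (1 - ε) • m t + ENNReal.ofReal ε • μ₀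
        = (ENNReal.ofReal (1 - ε) * ENNReal.ofReal (1 - t) + ENNReal.ofReal ε) • μ₀
          + (ENNReal.ofReal (1 - ε) * ENNReal.ofReal t) • μ₁ := by
      simp only [hm, smul_add, smul_smul, add_smul]
      abel
    rw [e1, hm]
    congr 1
    · rw [← ENNReal.ofReal_mul (by linarith [hε.2]),
        ← ENNReal.ofReal_add (by nlinarith [hε.1, hε.2, ht.1, ht.2]) hε.1]
      congr 1; ring
    · rw [← ENNReal.ofReal_mul (by linarith [hε.2])]
      congr 1; ring
  -- right slope limit
  have hR : ∀ t ∈ Ico (0:ℝ) 1, Tendsto (slope h t) (nhdsWithin t (Ioi t)) (nhds (g t)) := by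
    intro t ht
    have h1t : (0:ℝ) < 1 - t := by linarith [ht.2]
    have h1t' : (1:ℝ) - t ≠ 0 := ne_of_gt h1t
    have H := hfirstvar (m t) (hP2 t ⟨ht.1, ht.2.le⟩) μ₁ hμ₁
    have key : ∀ᶠ ε in nhdsWithin (0:ℝ) (Ioi 0),
        (G (ENNReal.ofReal (1 - ε) • m t + ENNReal.ofReal ε • μ₁) - G (m t)) / ε
          = (h (t + (1 - t) * ε) - h t) / ε := by
      filter_upwards [Ioo_mem_nhdsGT_of_mem (by norm_num : (0:ℝ) ∈ Ico (0:ℝ) 1)] with ε hε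
      rw [hmixR t ⟨ht.1, ht.2.le⟩ ε ⟨hε.1.le, hε.2.le⟩]
    have H' : Tendsto (fun ε => (h (t + (1 - t) * ε) - h t) / ε) (nhdsWithin (0:ℝ) (Ioi 0))
        (nhds ((∫ x, V (m t) x ∂μ₁) - c t)) := H.congr' key
    have hθ : Tendsto (fun s => (s - t) / (1 - t)) (nhdsWithin t (Ioi t))
        (nhdsWithin (0:ℝ) (Ioi 0)) := by
      apply tendsto_nhdsWithin_of_tendsto_nhds_of_eventually_within
      · have : Tendsto (fun s => (s - t) / (1 - t)) (nhds t) (nhds ((t - t) / (1 - t))) :=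
          (tendsto_id.sub tendsto_const_nhds).div_const _
        simpa using this.mono_left nhdsWithin_le_nhds
      · filter_upwards [self_mem_nhdsWithin] with s hs
        exact div_pos (sub_pos.2 hs) h1t
    have H3 : Tendsto (fun s => (1 - t) * slope h t s) (nhdsWithin t (Ioi t))
        (nhds ((∫ x, V (m t) x ∂μ₁) - c t)) := by
      apply (H'.comp hθ).congr
      intro s
      simp only [Function.comp]
      have harg : t + (1 - t) * ((s - t) / (1 - t)) = s := by field_simp; ring
      rw [harg, slope_def_field, div_div_eq_mul_div]
      ring
    have H4 := H3.const_mul ((1 - t)⁻¹)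
    have H5 : Tendsto (slope h t) (nhdsWithin t (Ioi t))
        (nhds ((1 - t)⁻¹ * ((∫ x, V (m t) x ∂μ₁) - c t))) := by
      apply H4.congr
      intro s
      rw [← mul_assoc, inv_mul_cancel₀ h1t', one_mul]
    have : g t = (1 - t)⁻¹ * ((∫ x, V (m t) x ∂μ₁) - c t) := by
      simp only [hg]; rw [div_eq_inv_mul]
    rw [this]
    exact H5
  -- left slope limit
  have hL : ∀ t ∈ Ioc (0:ℝ) 1, Tendsto (slope h t) (nhdsWithin t (Iio t)) (nhds (g' t)) := by
    intro t ht
    have ht0 : (0:ℝ) < t := ht.1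
    have ht0' : (t:ℝ) ≠ 0 := ne_of_gt ht0
    have H := hfirstvar (m t) (hP2 t ⟨ht.1.le, ht.2⟩) μ₀ hμ₀
    have key : ∀ᶠ ε in nhdsWithin (0:ℝ) (Ioi 0),
        (G (ENNReal.ofReal (1 - ε) • m t + ENNReal.ofReal ε • μ₀) - G (m t)) / ε
          = (h (t - t * ε) - h t) / ε := by
      filter_upwards [Ioo_mem_nhdsGT_of_mem (by norm_num : (0:ℝ) ∈ Ico (0:ℝ) 1)] with ε hε
      rw [hmixL t ⟨ht.1.le, ht.2⟩ ε ⟨hε.1.le, hε.2.le⟩]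
    have H' : Tendsto (fun ε => (h (t - t * ε) - h t) / ε) (nhdsWithin (0:ℝ) (Ioi 0))
        (nhds ((∫ x, V (m t) x ∂μ₀) - c t)) := H.congr' key
    have hθ : Tendsto (fun s => (t - s) / t) (nhdsWithin t (Iio t))
        (nhdsWithin (0:ℝ) (Ioi 0)) := by
      apply tendsto_nhdsWithin_of_tendsto_nhds_of_eventually_within
      · have : Tendsto (fun s => (t - s) / t) (nhds t) (nhds ((t - t) / t)) :=
          (tendsto_const_nhds.sub tendsto_id).div_const _
        simpa using this.mono_left nhdsWithin_le_nhds
      · filter_upwards [self_mem_nhdsWithin] with s hs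
        exact div_pos (sub_pos.2 hs) ht0
    have H3 : Tendsto (fun s => (-t) * slope h t s) (nhdsWithin t (Iio t))
        (nhds ((∫ x, V (m t) x ∂μ₀) - c t)) := by
      apply Tendsto.congr' ?_ (H'.comp hθ)
      filter_upwards [self_mem_nhdsWithin] with s hs
      have hst : t - s ≠ 0 := by
        have : s < t := hs
        intro hx; linarith [sub_eq_zero.mp hx]
      simp only [Function.comp]
      have harg : t - t * ((t - s) / t) = s := by field_simp; ring
      rw [harg, slope_def_field]
      have hst' : s - t ≠ 0 := by intro hx; apply hst; linarith [sub_eq_zero.mp hx]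
      rw [div_div_eq_mul_div, ← mul_div_assoc, div_eq_div_iff hst hst']
      ring
    have H4 := H3.const_mul ((-t)⁻¹)
    have H5 : Tendsto (slope h t) (nhdsWithin t (Iio t))
        (nhds ((-t)⁻¹ * ((∫ x, V (m t) x ∂μ₀) - c t))) := by
      apply H4.congr
      intro s
      rw [← mul_assoc, inv_mul_cancel₀ (by simpa using ht0' : (-t:ℝ) ≠ 0), one_mul]
    have : g' t = (-t)⁻¹ * ((∫ x, V (m t) x ∂μ₀) - c t) := by
      simp only [hg']
      rw [div_eq_inv_mul, inv_neg]
      ring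
    rw [this]
    exact H5
  -- one-sided derivatives
  have hDr : ∀ t ∈ Ico (0:ℝ) 1, HasDerivWithinAt h (g t) (Ioi t) t := fun t ht =>
    (hasDerivWithinAt_iff_tendsto_slope' (by simp)).2 (hR t ht)
  have hDl : ∀ t ∈ Ioc (0:ℝ) 1, HasDerivWithinAt h (g' t) (Iio t) t := fun t ht =>
    (hasDerivWithinAt_iff_tendsto_slope' (by simp)).2 (hL t ht)
  -- continuity of h on [0,1]
  have hhc : ContinuousOn h (Icc 0 1) := by
    intro t ht
    rcases eq_or_lt_of_le ht.1 with h0 | h0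
    · have cw := (hDr 0 (by norm_num)).continuousWithinAt
      have : ContinuousWithinAt h (insert 0 (Ioi 0)) 0 := cw.insert
      rw [← h0]
      refine this.mono fun s hs => ?_
      rw [mem_insert_iff]
      rcases eq_or_lt_of_le hs.1 with h2 | h2
      · exact Or.inl h2.symm
      · exact Or.inr h2
    rcases eq_or_lt_of_le ht.2 with h1 | h1
    · have cw := (hDl 1 (by norm_num)).continuousWithinAt
      have : ContinuousWithinAt h (insert 1 (Iio 1)) 1 := cw.insert
      rw [h1]
      refine this.mono fun s hs => ?_
      rw [mem_insert_iff]
      rcases eq_or_lt_of_le hs.2 with h2 | h2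
      · exact Or.inl h2
      · exact Or.inr h2
    · have cr := (hDr t ⟨ht.1, h1⟩).continuousWithinAt
      have cl := (hDl t ⟨h0, ht.2⟩).continuousWithinAt
      have hcu : ContinuousWithinAt h (Iio t ∪ Ioi t) t := cl.union cr
      rw [Iio_union_Ioi] at hcu
      have hins : ContinuousWithinAt h (insert t ({t}ᶜ)) t := hcu.insert
      have huniv : insert t ({t}ᶜ : Set ℝ) = univ := by
        ext s; simp [eq_or_ne s t]
      rw [huniv, continuousWithinAt_univ] at hins
      exact hins.continuousWithinAt
  -- where one-sided derivatives agree, they equal φ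
  have hgφ : ∀ t ∈ Ioo (0:ℝ) 1, g t = g' t → g t = φ t := by
    intro t ht heq
    have h1t : (1:ℝ) - t ≠ 0 := by have := ht.2; intro hx; linarith
    have ht0 : (t:ℝ) ≠ 0 := ne_of_gt ht.1
    simp only [hg, hg'] at heq
    simp only [hg, hφ]
    rw [div_eq_div_iff h1t ht0] at heq
    rw [div_eq_iff h1t]
    linear_combination heq
  have hB : {t | t ∈ Ioo (0:ℝ) 1 ∧ g t ≠ g' t}.Countable :=
    countable_onesided_ne h g g'
      (fun t ht => hR t ⟨ht.1.le, ht.2⟩) (fun t ht => hL t ⟨ht.1, ht.2.le⟩)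
  -- a.e. equality of g and φ on (0,1]
  have hE0 : volume ({t | t ∈ Ioo (0:ℝ) 1 ∧ g t ≠ g' t} ∪ {1}) = 0 :=
    (hB.union (countable_singleton 1)).measure_zero _
  have hae0 : ∀ᵐ t ∂(volume : Measure ℝ), t ∈ Ioc (0:ℝ) 1 → g t = φ t := by
    filter_upwards [(measure_eq_zero_iff_ae_notMem).1 hE0] with t hnm hmem
    have ht1 : t ≠ 1 := fun hx => hnm (Or.inr (by simp [hx]))
    have htIoo : t ∈ Ioo (0:ℝ) 1 := ⟨hmem.1, lt_of_le_of_ne hmem.2 ht1⟩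
    have hne : ¬ (g t ≠ g' t) := fun hx => hnm (Or.inl ⟨htIoo, hx⟩)
    exact hgφ t htIoo (not_not.1 hne)
  have hae : ∀ᵐ t ∂(volume.restrict (Ioc (0:ℝ) 1)), g t = φ t :=
    (ae_restrict_iff' measurableSet_Ioc).2 hae0
  -- integrability
  have hφint : IntervalIntegrable φ volume 0 1 := by
    apply ContinuousOn.intervalIntegrable
    rw [uIcc_of_le zero_le_one]
    exact hcont
  have hgint : IntervalIntegrable g volume 0 1 := by
    rw [intervalIntegrable_iff_integrableOn_Ioc_of_le zero_le_one]
    rw [intervalIntegrable_iff_integrableOn_Ioc_of_le zero_le_one] at hφint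
    exact hφint.congr (hae.mono fun t htt => htt.symm)
  -- FTC
  have hFTC := intervalIntegral.integral_eq_sub_of_hasDeriv_right_of_le zero_le_one hhc
    (fun t ht => hDr t ⟨ht.1.le, ht.2⟩) hgint
  have hcongr : ∫ t in (0:ℝ)..1, g t = ∫ t in (0:ℝ)..1, φ t := by
    apply intervalIntegral.integral_congr_ae
    simp only [uIoc_of_le (zero_le_one : (0:ℝ) ≤ 1)]
    exact hae0
  have e1 : h 1 = G μ₁ := by show G (m 1) = G μ₁; rw [hm1]
  have e0 : h 0 = G μ₀ := by show G (m 0) = G μ₀; rw [hm0]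
  calc G μ₁ - G μ₀ = h 1 - h 0 := by rw [e1, e0]
    _ = ∫ t in (0:ℝ)..1, g t := hFTC.symm
    _ = ∫ t in (0:ℝ)..1, φ t := hcongr
    _ = ∫ t in Ioc (0:ℝ) 1, φ t := intervalIntegral.integral_of_le zero_le_one
    _ = ∫ t in Icc (0:ℝ) 1, φ t := (integral_Icc_eq_integral_Ioc).symm
end
end
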